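/- Let B be a totally sign-skew-symmetric n×n integer matrix satisfying the Assumption, let w be a finite sequence of mutation indices and let k be an index. Let ε ∈ {1, −1} be the sign of the k-th row of G_w^B (which is sign-coherent under the Assumption). Then the C- and G-matrices of μ_k(B) along the sequence k·w (k prepended to w) satisfy C_{k·w}^{μ_k(B)} = (J_k + [−ε·B]_+^{k·})·C_w^B and G_{k·w}^{μ_k(B)} = (J_k + [ε·B]_+^{·k})·G_w^B. -/

import Mathlib

open Matrix

/-- Mutation of an integer matrix at index `k`. -/
def mutB {n : ℕ} (B : Matrix (Fin n) (Fin n) ℤ) (k : Fin n) : Matrix (Fin n) (Fin n) ℤ :=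
  Matrix.of fun i j =>
    if i = k ∨ j = k then -B i j
    else B i j + (B i k).sign * max (B i k * B k j) 0

/-- Sign-skew-symmetric matrix. -/
def SignSkew {n : ℕ} (B : Matrix (Fin n) (Fin n) ℤ) : Prop :=
  ∀ i j, B i j * B j i ≤ 0 ∧ (B i j * B j i = 0 → B i j = 0 ∧ B j i = 0)

/-- Entrywise positive part `[A]₊`. -/
def matPos {n : ℕ} (A : Matrix (Fin n) (Fin n) ℤ) : Matrix (Fin n) (Fin n) ℤ :=
  Matrix.of fun i j => max (A i j) 0

/-- `A^{k·}`: agrees with `A` in row `k`, zero elsewhere. -/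
def rowSel {n : ℕ} (A : Matrix (Fin n) (Fin n) ℤ) (k : Fin n) : Matrix (Fin n) (Fin n) ℤ :=
  Matrix.of fun i j => if i = k then A i j else 0

/-- `A^{·k}`: agrees with `A` in column `k`, zero elsewhere. -/
def colSel {n : ℕ} (A : Matrix (Fin n) (Fin n) ℤ) (k : Fin n) : Matrix (Fin n) (Fin n) ℤ :=
  Matrix.of fun i j => if j = k then A i j else 0

/-- `J_k`: identity matrix with the `(k,k)` entry replaced by `-1`. -/
def Jmat (n : ℕ) (k : Fin n) : Matrix (Fin n) (Fin n) ℤ :=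
  Matrix.of fun i j => if i = j then (if i = k then -1 else 1) else 0

/-- One mutation step on a triple `(B_w, C_w, G_w)`, with fixed initial matrix `B0`:
`B_{w·k} = μ_k(B_w)`, `C_{w·k} = C_w (J_k + [B_w]₊^{k·}) + [-C_w]₊^{·k} B_w`,
`G_{w·k} = G_w (J_k + [-B_w]₊^{·k}) - B0 [-C_w]₊^{·k}`. -/
def BCGstep {n : ℕ} (B0 : Matrix (Fin n) (Fin n) ℤ)
    (s : Matrix (Fin n) (Fin n) ℤ × Matrix (Fin n) (Fin n) ℤ × Matrix (Fin n) (Fin n) ℤ)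
    (k : Fin n) :
    Matrix (Fin n) (Fin n) ℤ × Matrix (Fin n) (Fin n) ℤ × Matrix (Fin n) (Fin n) ℤ :=
  (mutB s.1 k,
   s.2.1 * (Jmat n k + rowSel (matPos s.1) k) + colSel (matPos (-s.2.1)) k * s.1,
   s.2.2 * (Jmat n k + colSel (matPos (-s.1)) k) - B0 * colSel (matPos (-s.2.1)) k)

/-- The triple `(B_w, C_w, G_w)` associated to a mutation sequence `w`
(entries of `w` are applied from left to right). -/
def BCG {n : ℕ} (B : Matrix (Fin n) (Fin n) ℤ) (w : List (Fin n)) :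
    Matrix (Fin n) (Fin n) ℤ × Matrix (Fin n) (Fin n) ℤ × Matrix (Fin n) (Fin n) ℤ :=
  w.foldl (BCGstep B) (B, 1, 1)

/-- The exchange matrix `B_w` of `B` at the sequence `w`. -/
def Bmat {n : ℕ} (B : Matrix (Fin n) (Fin n) ℤ) (w : List (Fin n)) :
    Matrix (Fin n) (Fin n) ℤ := (BCG B w).1

/-- The `C`-matrix `C_w^B`. -/
def Cmat {n : ℕ} (B : Matrix (Fin n) (Fin n) ℤ) (w : List (Fin n)) :
    Matrix (Fin n) (Fin n) ℤ := (BCG B w).2.1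

/-- The `G`-matrix `G_w^B`. -/
def Gmat {n : ℕ} (B : Matrix (Fin n) (Fin n) ℤ) (w : List (Fin n)) :
    Matrix (Fin n) (Fin n) ℤ := (BCG B w).2.2

/-- Totally sign-skew-symmetric: every matrix obtained from `B` by a finite sequence of
mutations is sign-skew-symmetric. -/
def TotSSS {n : ℕ} (B : Matrix (Fin n) (Fin n) ℤ) : Prop :=
  ∀ w : List (Fin n), SignSkew (Bmat B w)

/-- The `j`-th column of `A` is sign-coherent with sign `ε`. -/
def ColHasSign {n : ℕ} (A : Matrix (Fin n) (Fin n) ℤ) (j : Fin n) (ε : ℤ) : Prop :=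
  (∃ i, A i j ≠ 0) ∧ ((ε = 1 ∧ ∀ i, 0 ≤ A i j) ∨ (ε = -1 ∧ ∀ i, A i j ≤ 0))

/-- The `j`-th column of `A` is sign-coherent. -/
def ColSignCoherent {n : ℕ} (A : Matrix (Fin n) (Fin n) ℤ) (j : Fin n) : Prop :=
  ∃ ε : ℤ, ColHasSign A j ε

/-- The `i`-th row of `A` is sign-coherent with sign `ε`. -/
def RowHasSign {n : ℕ} (A : Matrix (Fin n) (Fin n) ℤ) (i : Fin n) (ε : ℤ) : Prop :=
  (∃ j, A i j ≠ 0) ∧ ((ε = 1 ∧ ∀ j, 0 ≤ A i j) ∨ (ε = -1 ∧ ∀ j, A i j ≤ 0))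

/-- The **Assumption**: for every matrix `B₀` obtained from `B` or `-B` by a finite
sequence of mutations, every sequence `w` and every index `k`, the `k`-th columns of
`C_w^{B₀}` and `C_w^{-B₀ᵀ}` are both sign-coherent with the same sign. -/
def TheAssumption {n : ℕ} (B : Matrix (Fin n) (Fin n) ℤ) : Prop :=
  ∀ B0 : Matrix (Fin n) (Fin n) ℤ,
    ((∃ v : List (Fin n), B0 = Bmat B v) ∨ (∃ v : List (Fin n), B0 = Bmat (-B) v)) →
    ∀ (w : List (Fin n)) (k : Fin n),
      ∃ ε : ℤ, ColHasSign (Cmat B0 w) k ε ∧ ColHasSign (Cmat (-B0ᵀ) w) k ε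

section Infra
variable {n : ℕ}

local notation "Mat" => Matrix (Fin n) (Fin n) ℤ

-- entry lemmas
lemma mutB_apply (B : Mat) (k i j : Fin n) :
    mutB B k i j = if i = k ∨ j = k then -B i j
      else B i j + (B i k).sign * max (B i k * B k j) 0 := rfl

lemma matPos_apply (A : Mat) (i j : Fin n) : matPos A i j = max (A i j) 0 := rfl

lemma rowSel_apply (A : Mat) (k i j : Fin n) :
    rowSel A k i j = if i = k then A i j else 0 := rfl

lemma colSel_apply (A : Mat) (k i j : Fin n) :
    colSel A k i j = if j = k then A i j else 0 := rfl

lemma Jmat_apply (k i j : Fin n) :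
    Jmat n k i j = if i = j then (if i = k then (-1 : ℤ) else 1) else 0 := rfl

-- scalar helpers
lemma sign_mul_max_comm (a b : ℤ) :
    a.sign * max (a * b) 0 = b.sign * max (b * a) 0 := by
  rcases lt_trichotomy a 0 with ha | ha | ha <;> rcases lt_trichotomy b 0 with hb | hb | hb
  · rw [Int.sign_eq_neg_one_iff_neg.mpr ha, Int.sign_eq_neg_one_iff_neg.mpr hb,
      mul_comm a b]
  · simp [hb]
  · rw [Int.sign_eq_neg_one_iff_neg.mpr ha, Int.sign_eq_one_iff_pos.mpr hb,
      max_eq_right (le_of_lt (mul_neg_of_neg_of_pos ha hb)),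
      max_eq_right (le_of_lt (mul_neg_of_pos_of_neg hb ha))]
    ring
  · simp [ha]
  · simp [ha]
  · simp [ha]
  · rw [Int.sign_eq_one_iff_pos.mpr ha, Int.sign_eq_neg_one_iff_neg.mpr hb,
      max_eq_right (le_of_lt (mul_neg_of_pos_of_neg ha hb)),
      max_eq_right (le_of_lt (mul_neg_of_neg_of_pos hb ha))]
    ring
  · simp [hb]
  · rw [Int.sign_eq_one_iff_pos.mpr ha, Int.sign_eq_one_iff_pos.mpr hb, mul_comm a b]

lemma sign_neg_mul_max (a b : ℤ) :
    (-a).sign * max ((-a) * (-b)) 0 = -(a.sign * max (a * b) 0) := by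
  rw [Int.sign_neg, neg_mul_neg]; ring

-- mutation algebra
lemma mutB_mutB (B : Mat) (k : Fin n) : mutB (mutB B k) k = B := by
  ext i j
  by_cases h : i = k ∨ j = k
  · simp [mutB_apply, h]
  · have e0 : mutB (mutB B k) k i j = mutB B k i j
        + (mutB B k i k).sign * max (mutB B k i k * mutB B k k j) 0 := by
      rw [mutB_apply, if_neg h]
    push_neg at h
    have h1 : mutB B k i k = -B i k := by simp [mutB_apply]
    have h2 : mutB B k k j = -B k j := by simp [mutB_apply]
    rw [e0, h1, h2, mutB_apply, if_neg (not_or.mpr h), sign_neg_mul_max]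
    ring

lemma mutB_neg (B : Mat) (k : Fin n) : mutB (-B) k = -(mutB B k) := by
  ext i j
  by_cases h : i = k ∨ j = k
  · simp [mutB_apply, h]
  · rw [Matrix.neg_apply, mutB_apply, if_neg h, mutB_apply, if_neg h,
      Matrix.neg_apply, Matrix.neg_apply, Matrix.neg_apply, sign_neg_mul_max]
    ring

lemma mutB_transpose (B : Mat) (k : Fin n) : mutB Bᵀ k = (mutB B k)ᵀ := by
  ext i j
  by_cases h : i = k ∨ j = k
  · have h' : j = k ∨ i = k := h.symm
    simp [mutB_apply, h, h', Matrix.transpose_apply]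
  · push_neg at h
    have h' : ¬(j = k ∨ i = k) := by tauto
    rw [Matrix.transpose_apply, mutB_apply, if_neg (not_or.mpr h), mutB_apply, if_neg h',
      Matrix.transpose_apply, Matrix.transpose_apply, Matrix.transpose_apply,
      sign_mul_max_comm]

end Infra
section Fold
variable {n : ℕ}
local notation "Mat" => Matrix (Fin n) (Fin n) ℤ

lemma BCG_nil (B : Mat) : BCG B [] = (B, 1, 1) := rfl

lemma BCG_concat (B : Mat) (w : List (Fin n)) (l : Fin n) :
    BCG B (w ++ [l]) = BCGstep B (BCG B w) l := by
  simp [BCG, List.foldl_append]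

lemma BCG_fst_aux (B0 : Mat) (w : List (Fin n)) :
    ∀ s : Mat × Mat × Mat, (w.foldl (BCGstep B0) s).1 = w.foldl mutB s.1 := by
  induction w with
  | nil => intro s; rfl
  | cons k w ih => intro s; exact ih (BCGstep B0 s k)

lemma Bmat_eq_foldl (B : Mat) (w : List (Fin n)) : Bmat B w = w.foldl mutB B :=
  BCG_fst_aux B w (B, 1, 1)

lemma Bmat_nil (B : Mat) : Bmat B [] = B := rfl

lemma Bmat_cons (B : Mat) (k : Fin n) (w : List (Fin n)) :
    Bmat B (k :: w) = Bmat (mutB B k) w := by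
  simp [Bmat_eq_foldl]

lemma Bmat_concat (B : Mat) (w : List (Fin n)) (l : Fin n) :
    Bmat B (w ++ [l]) = mutB (Bmat B w) l := by
  simp [Bmat_eq_foldl, List.foldl_append]

lemma Bmat_append (B : Mat) (v w : List (Fin n)) :
    Bmat B (v ++ w) = Bmat (Bmat B v) w := by
  simp [Bmat_eq_foldl, List.foldl_append]

lemma Bmat_single (B : Mat) (k : Fin n) : Bmat B [k] = mutB B k := rfl

lemma Bmat_neg (B : Mat) (w : List (Fin n)) : Bmat (-B) w = -(Bmat B w) := by
  induction w generalizing B with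
  | nil => rfl
  | cons k w ih => rw [Bmat_cons, Bmat_cons, mutB_neg, ih]

lemma Bmat_transpose (B : Mat) (w : List (Fin n)) : Bmat Bᵀ w = (Bmat B w)ᵀ := by
  induction w generalizing B with
  | nil => rfl
  | cons k w ih => rw [Bmat_cons, Bmat_cons, mutB_transpose, ih]

lemma Bmat_reverse (B : Mat) (w : List (Fin n)) : Bmat (Bmat B w) w.reverse = B := by
  induction w generalizing B with
  | nil => rfl
  | cons k w ih =>
    rw [Bmat_cons, List.reverse_cons, Bmat_append]
    rw [ih (mutB B k), Bmat_single, mutB_mutB]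

lemma Bmat_mut_cons (B : Mat) (k : Fin n) (w : List (Fin n)) :
    Bmat (mutB B k) (k :: w) = Bmat B w := by
  rw [Bmat_cons, mutB_mutB]

lemma Cmat_concat (B0 : Mat) (w : List (Fin n)) (l : Fin n) :
    Cmat B0 (w ++ [l]) = Cmat B0 w * (Jmat n l + rowSel (matPos (Bmat B0 w)) l)
      + colSel (matPos (-(Cmat B0 w))) l * Bmat B0 w := by
  rw [Cmat, BCG_concat]; rfl

lemma Gmat_concat (B0 : Mat) (w : List (Fin n)) (l : Fin n) :
    Gmat B0 (w ++ [l]) = Gmat B0 w * (Jmat n l + colSel (matPos (-(Bmat B0 w))) l)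
      - B0 * colSel (matPos (-(Cmat B0 w))) l := by
  rw [Gmat, BCG_concat]; rfl

lemma Cmat_nil (B : Mat) : Cmat B [] = 1 := rfl
lemma Gmat_nil (B : Mat) : Gmat B [] = 1 := rfl

end Fold

section Entry
variable {n : ℕ}
local notation "Mat" => Matrix (Fin n) (Fin n) ℤ

lemma mul_Jmat_apply (A : Mat) (l i j : Fin n) :
    (A * Jmat n l) i j = if j = l then -A i l else A i j := by
  rw [Matrix.mul_apply, Finset.sum_eq_single j]
  · rw [Jmat_apply, if_pos rfl]
    by_cases hj : j = l
    · subst hj; simp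
    · simp [hj]
  · intro s _ hs; rw [Jmat_apply, if_neg hs, mul_zero]
  · intro h; exact absurd (Finset.mem_univ j) h

lemma Jmat_mul_apply (A : Mat) (l i j : Fin n) :
    (Jmat n l * A) i j = if i = l then -A l j else A i j := by
  rw [Matrix.mul_apply, Finset.sum_eq_single i]
  · rw [Jmat_apply, if_pos rfl]
    by_cases hi : i = l
    · subst hi; simp
    · simp [hi]
  · intro s _ hs; rw [Jmat_apply, if_neg (Ne.symm hs), zero_mul]
  · intro h; exact absurd (Finset.mem_univ i) h

lemma mul_rowSel_apply (A X : Mat) (l i j : Fin n) :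
    (A * rowSel X l) i j = A i l * X l j := by
  rw [Matrix.mul_apply, Finset.sum_eq_single l]
  · rw [rowSel_apply, if_pos rfl]
  · intro s _ hs; rw [rowSel_apply, if_neg hs, mul_zero]
  · intro h; exact absurd (Finset.mem_univ l) h

lemma rowSel_mul_apply (A X : Mat) (l i j : Fin n) :
    (rowSel X l * A) i j = if i = l then (X * A) l j else 0 := by
  rw [Matrix.mul_apply]
  by_cases hi : i = l
  · subst hi; rw [if_pos rfl, Matrix.mul_apply]
    exact Finset.sum_congr rfl fun s _ => by rw [rowSel_apply, if_pos rfl]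
  · rw [if_neg hi]
    exact Finset.sum_eq_zero fun s _ => by rw [rowSel_apply, if_neg hi, zero_mul]

lemma mul_colSel_apply (A X : Mat) (l i j : Fin n) :
    (A * colSel X l) i j = if j = l then (A * X) i l else 0 := by
  rw [Matrix.mul_apply]
  by_cases hj : j = l
  · subst hj; rw [if_pos rfl, Matrix.mul_apply]
    exact Finset.sum_congr rfl fun s _ => by rw [colSel_apply, if_pos rfl]
  · rw [if_neg hj]
    exact Finset.sum_eq_zero fun s _ => by rw [colSel_apply, if_neg hj, mul_zero]

lemma colSel_mul_apply (A X : Mat) (l i j : Fin n) :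
    (colSel X l * A) i j = X i l * A l j := by
  rw [Matrix.mul_apply, Finset.sum_eq_single l]
  · rw [colSel_apply, if_pos rfl]
  · intro s _ hs; rw [colSel_apply, if_neg hs, zero_mul]
  · intro h; exact absurd (Finset.mem_univ l) h

lemma mul_J_add_rowSel_apply (A X : Mat) (l i j : Fin n) :
    (A * (Jmat n l + rowSel X l)) i j
      = (if j = l then -A i l else A i j) + A i l * X l j := by
  rw [Matrix.mul_add, Matrix.add_apply, mul_Jmat_apply, mul_rowSel_apply]

lemma mul_J_add_colSel_apply (A X : Mat) (l i j : Fin n) :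
    (A * (Jmat n l + colSel X l)) i j
      = (if j = l then -A i l + (A * X) i l else A i j) := by
  rw [Matrix.mul_add, Matrix.add_apply, mul_Jmat_apply, mul_colSel_apply]
  by_cases hj : j = l <;> simp [hj]

lemma J_add_rowSel_mul_apply (A X : Mat) (l i j : Fin n) :
    ((Jmat n l + rowSel X l) * A) i j
      = (if i = l then -A l j + (X * A) l j else A i j) := by
  rw [Matrix.add_mul, Matrix.add_apply, Jmat_mul_apply, rowSel_mul_apply]
  by_cases hi : i = l <;> simp [hi]

lemma J_add_colSel_mul_apply (A X : Mat) (l i j : Fin n) :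
    ((Jmat n l + colSel X l) * A) i j
      = (if i = l then -A l j else A i j) + X i l * A l j := by
  rw [Matrix.add_mul, Matrix.add_apply, Jmat_mul_apply, colSel_mul_apply]

-- transposition lemmas
lemma Jmat_transpose (l : Fin n) : (Jmat n l)ᵀ = Jmat n l := by
  ext i j
  rw [Matrix.transpose_apply, Jmat_apply, Jmat_apply]
  by_cases h : i = j
  · subst h; rfl
  · rw [if_neg h, if_neg (Ne.symm h)]

lemma rowSel_transpose (A : Mat) (l : Fin n) : (rowSel A l)ᵀ = colSel Aᵀ l := rfl

lemma matPos_transpose (A : Mat) : (matPos A)ᵀ = matPos Aᵀ := rfl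

end Entry
section Signs
variable {n : ℕ}
local notation "Mat" => Matrix (Fin n) (Fin n) ℤ

lemma ColHasSign.pm {A : Mat} {j : Fin n} {ε : ℤ} (h : ColHasSign A j ε) :
    ε = 1 ∨ ε = -1 := by rcases h.2 with ⟨h1, _⟩ | ⟨h1, _⟩ <;> [left; right] <;> exact h1

lemma RowHasSign.pm {A : Mat} {i : Fin n} {ε : ℤ} (h : RowHasSign A i ε) :
    ε = 1 ∨ ε = -1 := by rcases h.2 with ⟨h1, _⟩ | ⟨h1, _⟩ <;> [left; right] <;> exact h1

lemma ColHasSign.unique {A : Mat} {j : Fin n} {ε ε' : ℤ}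
    (h : ColHasSign A j ε) (h' : ColHasSign A j ε') : ε = ε' := by
  obtain ⟨i0, hi0⟩ := h.1
  rcases h.2 with ⟨h1, hs⟩ | ⟨h1, hs⟩ <;> rcases h'.2 with ⟨h1', hs'⟩ | ⟨h1', hs'⟩
  · rw [h1, h1']
  · exact absurd (le_antisymm (hs' i0) (hs i0)) hi0
  · exact absurd (le_antisymm (hs i0) (hs' i0)) hi0
  · rw [h1, h1']

lemma RowHasSign.unique {A : Mat} {i : Fin n} {ε ε' : ℤ}
    (h : RowHasSign A i ε) (h' : RowHasSign A i ε') : ε = ε' := by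
  obtain ⟨j0, hj0⟩ := h.1
  rcases h.2 with ⟨h1, hs⟩ | ⟨h1, hs⟩ <;> rcases h'.2 with ⟨h1', hs'⟩ | ⟨h1', hs'⟩
  · rw [h1, h1']
  · exact absurd (le_antisymm (hs' j0) (hs j0)) hj0
  · exact absurd (le_antisymm (hs j0) (hs' j0)) hj0
  · rw [h1, h1']

lemma rowHasSign_transpose {A : Mat} {k : Fin n} {ε : ℤ} :
    RowHasSign Aᵀ k ε ↔ ColHasSign A k ε := Iff.rfl

/-- If two sign-coherent columns share a common nonzero entry, the signs agree. -/
lemma sign_eq_of_common_entry {A A' : Mat} {j j' : Fin n} {ε ε' : ℤ} {i : Fin n}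
    (h : ColHasSign A j ε) (h' : ColHasSign A' j' ε')
    (he : A i j = A' i j') (hne : A i j ≠ 0) : ε = ε' := by
  rcases h.2 with ⟨h1, hs⟩ | ⟨h1, hs⟩ <;> rcases h'.2 with ⟨h1', hs'⟩ | ⟨h1', hs'⟩
  · rw [h1, h1']
  · exact absurd (le_antisymm (he ▸ hs' i) (hs i)) hne
  · exact absurd (le_antisymm (hs i) (he ▸ hs' i)) hne
  · rw [h1, h1']

lemma SignSkew.diag {M : Mat} (h : SignSkew M) (l : Fin n) : M l l = 0 :=
  mul_self_eq_zero.mp (le_antisymm (h l l).1 (mul_self_nonneg _))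

end Signs

section SR
variable {n : ℕ}
local notation "Mat" => Matrix (Fin n) (Fin n) ℤ

lemma matPos_sub_matPos_neg (A : Mat) : matPos A - matPos (-A) = A := by
  ext i j
  rw [Matrix.sub_apply, matPos_apply, matPos_apply, Matrix.neg_apply]
  rcases le_total (A i j) 0 with h | h
  · rw [max_eq_right h, max_eq_left (neg_nonneg.mpr h)]; ring
  · rw [max_eq_left h, max_eq_right (neg_nonpos.mpr h)]; ring

lemma matPos_eq_negadd (A : Mat) : matPos A = matPos (-A) + A := by
  have h := sub_eq_iff_eq_add.mp (matPos_sub_matPos_neg A)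
  rw [h, add_comm]

lemma matPos_neg_eq_sub (A : Mat) : matPos (-A) = matPos A - A :=
  eq_sub_of_add_eq (matPos_eq_negadd A).symm

lemma rowSel_sub (A B : Mat) (l : Fin n) :
    rowSel A l - rowSel B l = rowSel (A - B) l := by
  ext i j; by_cases h : i = l <;> simp [rowSel_apply, h]

lemma colSel_sub (A B : Mat) (l : Fin n) :
    colSel A l - colSel B l = colSel (A - B) l := by
  ext i j; by_cases h : j = l <;> simp [colSel_apply, h]

lemma colSel_mul_eq_mul_rowSel (X M : Mat) (l : Fin n) :
    colSel X l * M = X * rowSel M l := by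
  ext i j; rw [colSel_mul_apply, mul_rowSel_apply]

lemma neg_one_smul_int (A : Mat) : (-1 : ℤ) • A = -A := by
  ext i j; simp

/-- simplified C-recursion under column sign coherence -/
lemma SR_C (B0 : Mat) (w : List (Fin n)) (l : Fin n) (σ : ℤ)
    (hσ : ColHasSign (Cmat B0 w) l σ) :
    Cmat B0 (w ++ [l])
      = Cmat B0 w * (Jmat n l + rowSel (matPos (σ • Bmat B0 w)) l) := by
  rw [Cmat_concat]
  set C := Cmat B0 w with hC
  set M := Bmat B0 w with hM
  rcases hσ.2 with ⟨h1, hs⟩ | ⟨h1, hs⟩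
  · subst h1
    have hz : colSel (matPos (-C)) l = 0 := by
      ext i j
      by_cases h : j = l
      · subst h
        rw [colSel_apply, if_pos rfl, matPos_apply, Matrix.neg_apply,
          max_eq_right (neg_nonpos.mpr (hs i))]
        rfl
      · rw [colSel_apply, if_neg h]; rfl
    rw [hz, Matrix.zero_mul, add_zero, one_smul]
  · subst h1
    have hz : colSel (matPos (-C)) l = -(colSel C l) := by
      ext i j
      by_cases h : j = l
      · subst h
        rw [colSel_apply, if_pos rfl, matPos_apply, Matrix.neg_apply,
          max_eq_left (neg_nonneg.mpr (hs i)), Matrix.neg_apply, colSel_apply, if_pos rfl]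
      · rw [colSel_apply, if_neg h, Matrix.neg_apply, colSel_apply, if_neg h, neg_zero]
    rw [hz, neg_one_smul_int]
    have key : rowSel (matPos M) l - rowSel (matPos (-M)) l = rowSel M l := by
      rw [rowSel_sub, matPos_sub_matPos_neg]
    have : rowSel (matPos (-M)) l = rowSel (matPos M) l - rowSel M l := by
      rw [← key]; abel
    rw [this, Matrix.neg_mul, colSel_mul_eq_mul_rowSel]
    rw [mul_add, mul_add, mul_sub]
    abel

/-- simplified G-recursion under column sign coherence and `G M = B0 C` -/
lemma SR_G (B0 : Mat) (w : List (Fin n)) (l : Fin n) (σ : ℤ)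
    (hσ : ColHasSign (Cmat B0 w) l σ)
    (hGBC : Gmat B0 w * Bmat B0 w = B0 * Cmat B0 w) :
    Gmat B0 (w ++ [l])
      = Gmat B0 w * (Jmat n l + colSel (matPos (-(σ • Bmat B0 w))) l) := by
  rw [Gmat_concat]
  set C := Cmat B0 w with hC
  set M := Bmat B0 w with hM
  set G := Gmat B0 w with hG
  rcases hσ.2 with ⟨h1, hs⟩ | ⟨h1, hs⟩
  · subst h1
    have hz : colSel (matPos (-C)) l = 0 := by
      ext i j
      by_cases h : j = l
      · subst h
        rw [colSel_apply, if_pos rfl, matPos_apply, Matrix.neg_apply,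
          max_eq_right (neg_nonpos.mpr (hs i))]
        rfl
      · rw [colSel_apply, if_neg h]; rfl
    rw [hz, Matrix.mul_zero, sub_zero, one_smul]
  · subst h1
    have hz : colSel (matPos (-C)) l = -(colSel C l) := by
      ext i j
      by_cases h : j = l
      · subst h
        rw [colSel_apply, if_pos rfl, matPos_apply, Matrix.neg_apply,
          max_eq_left (neg_nonneg.mpr (hs i)), Matrix.neg_apply, colSel_apply, if_pos rfl]
      · rw [colSel_apply, if_neg h, Matrix.neg_apply, colSel_apply, if_neg h, neg_zero]
    have hsm : -((-1 : ℤ) • M) = M := by rw [neg_one_smul_int, neg_neg]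
    rw [hz, hsm]
    have key : colSel (matPos M) l - colSel (matPos (-M)) l = colSel M l := by
      rw [colSel_sub, matPos_sub_matPos_neg]
    have h2 : colSel (matPos M) l = colSel (matPos (-M)) l + colSel M l := by
      rw [← key]; abel
    rw [h2]
    have h3 : G * colSel M l = B0 * colSel C l := by
      ext i j
      rw [mul_colSel_apply, mul_colSel_apply]
      by_cases h : j = l
      · rw [if_pos h, if_pos h, hGBC]
      · rw [if_neg h, if_neg h]
    rw [Matrix.mul_neg, ← h3]
    simp only [mul_add]
    abel

end SR
section Core
variable {n : ℕ}
local notation "Mat" => Matrix (Fin n) (Fin n) ℤ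

def Adm (B : Mat) : Prop := TotSSS B ∧ TheAssumption B

lemma key_scalar (σ a b : ℤ) (hσ : σ = 1 ∨ σ = -1) :
    a.sign * max (a * b) 0 + max (-(σ * a)) 0 * (-b) = a * max (σ * b) 0 := by
  rcases hσ with h | h <;> subst h <;>
    simp only [one_mul, neg_one_mul, neg_neg] <;>
    rcases lt_trichotomy a 0 with ha | ha | ha <;> rcases lt_trichotomy b 0 with hb | hb | hb
  · rw [Int.sign_eq_neg_one_iff_neg.mpr ha, max_eq_left (mul_pos_of_neg_of_neg ha hb).le,
      max_eq_left (neg_nonneg.mpr ha.le), max_eq_right hb.le]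
    ring
  · subst hb; simp
  · rw [Int.sign_eq_neg_one_iff_neg.mpr ha, max_eq_right (mul_neg_of_neg_of_pos ha hb).le,
      max_eq_left (neg_nonneg.mpr ha.le), max_eq_left hb.le]
    ring
  · subst ha; simp
  · subst ha; simp
  · subst ha; simp
  · rw [Int.sign_eq_one_iff_pos.mpr ha, max_eq_right (mul_neg_of_pos_of_neg ha hb).le,
      max_eq_right (neg_nonpos.mpr ha.le), max_eq_right hb.le]
    ring
  · subst hb; simp
  · rw [Int.sign_eq_one_iff_pos.mpr ha, max_eq_left (mul_pos ha hb).le,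
      max_eq_right (neg_nonpos.mpr ha.le), max_eq_left hb.le]
    ring
  · rw [Int.sign_eq_neg_one_iff_neg.mpr ha, max_eq_left (mul_pos_of_neg_of_neg ha hb).le,
      max_eq_right ha.le, max_eq_left (neg_nonneg.mpr hb.le)]
    ring
  · subst hb; simp
  · rw [Int.sign_eq_neg_one_iff_neg.mpr ha, max_eq_right (mul_neg_of_neg_of_pos ha hb).le,
      max_eq_right ha.le, max_eq_right (neg_nonpos.mpr hb.le)]
    ring
  · subst ha; simp
  · subst ha; simp
  · subst ha; simp
  · rw [Int.sign_eq_one_iff_pos.mpr ha, max_eq_right (mul_neg_of_pos_of_neg ha hb).le,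
      max_eq_left ha.le, max_eq_left (neg_nonneg.mpr hb.le)]
    ring
  · subst hb; simp
  · rw [Int.sign_eq_one_iff_pos.mpr ha, max_eq_left (mul_pos ha hb).le,
      max_eq_left ha.le, max_eq_right (neg_nonpos.mpr hb.le)]
    ring

lemma smul_apply' (σ : ℤ) (M : Mat) (i j : Fin n) : (σ • M) i j = σ * M i j := rfl

/-- the exchange identity -/
lemma I6 (M : Mat) (l : Fin n) (σ : ℤ) (hσ : σ = 1 ∨ σ = -1) (hll : M l l = 0) :
    (Jmat n l + colSel (matPos (-(σ • M))) l) * mutB M l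
      = M * (Jmat n l + rowSel (matPos (σ • M)) l) := by
  have hpll : matPos (-(σ • M)) l l = 0 := by
    rw [matPos_apply, Matrix.neg_apply, smul_apply', hll, mul_zero, neg_zero]; rfl
  ext i j
  rw [J_add_colSel_mul_apply, mul_J_add_rowSel_apply]
  by_cases hi : l = i
  · subst hi
    rw [if_pos rfl, hpll, zero_mul, add_zero]
    have hml : ∀ j', mutB M l l j' = -M l j' := fun j' => by
      rw [mutB_apply, if_pos (Or.inl rfl)]
    rw [hml j, neg_neg]
    by_cases hj : l = j
    · subst hj
      rw [if_pos rfl, hll, neg_zero, matPos_apply, smul_apply', hll, mul_zero, zero_mul,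
        add_zero]
    · rw [if_neg (fun h => hj h.symm), matPos_apply, smul_apply', hll, zero_mul, add_zero]
  · have hi' : ¬(i = l) := fun h => hi h.symm
    by_cases hj : l = j
    · subst hj
      rw [if_neg hi', if_pos rfl]
      have h1 : mutB M l i l = -M i l := by rw [mutB_apply, if_pos (Or.inr rfl)]
      have h2 : mutB M l l l = -M l l := by rw [mutB_apply, if_pos (Or.inl rfl)]
      rw [h1, h2, hll, neg_zero, mul_zero, add_zero, matPos_apply, smul_apply', hll,
        mul_zero, max_self, mul_zero, add_zero]
    · have hj' : ¬(j = l) := fun h => hj h.symm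
      rw [if_neg hi', if_neg hj']
      have h1 : mutB M l i j = M i j + (M i l).sign * max (M i l * M l j) 0 := by
        rw [mutB_apply, if_neg (not_or.mpr ⟨hi', hj'⟩)]
      have h2 : mutB M l l j = -M l j := by rw [mutB_apply, if_pos (Or.inl rfl)]
      rw [h1, h2, matPos_apply, Matrix.neg_apply, smul_apply', matPos_apply, smul_apply']
      have := key_scalar σ (M i l) (M l j) hσ
      linarith [this]

lemma SignSkew_negT {B : Mat} (h : SignSkew B) : SignSkew (-Bᵀ) := by
  intro i j
  simp only [Matrix.neg_apply, Matrix.transpose_apply]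
  have e : -B j i * -B i j = B j i * B i j := by ring
  rw [e]
  refine ⟨by rw [mul_comm]; exact (h i j).1, fun hz => ?_⟩
  have := (h j i).2 hz
  rw [this.1, this.2]
  exact ⟨neg_zero, neg_zero⟩

lemma SignSkew_neg {B : Mat} (h : SignSkew B) : SignSkew (-B) := by
  intro i j
  simp only [Matrix.neg_apply]
  have e : -B i j * -B j i = B i j * B j i := by ring
  rw [e]
  refine ⟨(h i j).1, fun hz => ?_⟩
  have := (h i j).2 hz
  rw [this.1, this.2]
  exact ⟨neg_zero, neg_zero⟩

lemma SignSkew_transpose {B : Mat} (h : SignSkew B) : SignSkew Bᵀ := by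
  intro i j
  simp only [Matrix.transpose_apply]
  refine ⟨by rw [mul_comm]; exact (h i j).1, fun hz => ?_⟩
  rw [mul_comm] at hz
  have := (h i j).2 hz
  exact ⟨this.2, this.1⟩

lemma Adm_neg {B : Mat} (h : Adm B) : Adm (-B) := by
  constructor
  · intro w; rw [Bmat_neg]; exact SignSkew_neg (h.1 w)
  · intro B0 hB0 w k
    apply h.2 B0
    rcases hB0 with ⟨v, hv⟩ | ⟨v, hv⟩
    · exact Or.inr ⟨v, hv⟩
    · rw [neg_neg] at hv; exact Or.inl ⟨v, hv⟩

lemma Adm_negT {B : Mat} (h : Adm B) : Adm (-Bᵀ) := by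
  constructor
  · intro w
    have : Bmat (-Bᵀ) w = -(Bmat B w)ᵀ := by rw [Bmat_neg, Bmat_transpose]
    rw [this]; exact SignSkew_negT (h.1 w)
  · intro B0 hB0 w k
    rcases hB0 with ⟨v, hv⟩ | ⟨v, hv⟩
    · -- B0 = Bmat (-Bᵀ) v = -(Bmat B v)ᵀ ; pair (C^{B0}, C^{-B0ᵀ}) = (C^{-Xᵀ}, C^{X})
      have hv' : B0 = -(Bmat B v)ᵀ := by rw [hv, Bmat_neg, Bmat_transpose]
      obtain ⟨ε, h1, h2⟩ := h.2 (Bmat B v) (Or.inl ⟨v, rfl⟩) w k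
      refine ⟨ε, ?_, ?_⟩
      · rw [hv']; exact h2
      · rw [hv', Matrix.transpose_neg, Matrix.transpose_transpose, neg_neg]; exact h1
    · -- B0 = Bmat (Bᵀ) v = (Bmat B v)ᵀ ; pair (C^{Xᵀ}, C^{-X})
      have hv' : B0 = (Bmat B v)ᵀ := by
        rw [hv, show -(-Bᵀ) = Bᵀ from neg_neg _, Bmat_transpose]
      obtain ⟨ε, h1, h2⟩ := h.2 (Bmat (-B) v) (Or.inr ⟨v, rfl⟩) w k
      rw [Bmat_neg] at h1 h2
      refine ⟨ε, ?_, ?_⟩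
      · rw [hv']
        have : (Bmat B v)ᵀ = -(-Bmat B v)ᵀ := by
          rw [Matrix.transpose_neg, neg_neg]
        rw [this]; exact h2
      · rw [hv']
        have : -((Bmat B v)ᵀ)ᵀ = -Bmat B v := by rw [Matrix.transpose_transpose]
        rw [this]; exact h1

lemma Adm_transpose {B : Mat} (h : Adm B) : Adm Bᵀ := by
  have h2 := Adm_negT (Adm_neg h)
  rwa [Matrix.transpose_neg, neg_neg] at h2

lemma Adm_Bmat {B : Mat} (h : Adm B) (v : List (Fin n)) : Adm (Bmat B v) := by
  constructor
  · intro w; rw [← Bmat_append]; exact h.1 (v ++ w)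
  · intro B0 hB0 w k
    apply h.2 B0
    rcases hB0 with ⟨u, hu⟩ | ⟨u, hu⟩
    · exact Or.inl ⟨v ++ u, by rw [hu, Bmat_append]⟩
    · rw [Bmat_neg, ← Bmat_append, ← Bmat_neg] at hu
      exact Or.inr ⟨v ++ u, hu⟩

lemma Adm_mut {B : Mat} (h : Adm B) (k : Fin n) : Adm (mutB B k) := by
  have := Adm_Bmat h [k]
  rwa [Bmat_single] at this

/-- `G_w B_w = B0 C_w` -/
lemma GBC {B0 : Mat} (h : Adm B0) :
    ∀ w : List (Fin n), Gmat B0 w * Bmat B0 w = B0 * Cmat B0 w := by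
  intro w
  induction w using List.reverseRecOn with
  | nil => show (1 : Mat) * B0 = B0 * 1; rw [one_mul, mul_one]
  | append_singleton w l ih =>
    obtain ⟨σ, hσ, -⟩ := h.2 B0 (Or.inl ⟨[], rfl⟩) w l
    have hσpm := hσ.pm
    have hss : SignSkew (Bmat B0 w) := h.1 w
    rw [SR_C B0 w l σ hσ, SR_G B0 w l σ hσ ih, Bmat_concat, mul_assoc,
      I6 (Bmat B0 w) l σ hσpm (hss.diag l), ← mul_assoc, ih, mul_assoc]

lemma J_colSel_invol (X : Mat) (l : Fin n) (hX : X l l = 0) :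
    (Jmat n l + colSel X l) * (Jmat n l + colSel X l) = 1 := by
  have hAlj : ∀ j, (Jmat n l + colSel X l) l j = if j = l then (-1 : ℤ) else 0 := by
    intro j
    rw [Matrix.add_apply, Jmat_apply, colSel_apply]
    by_cases hj : j = l
    · rw [hj]; simp [hX]
    · rw [if_neg hj, if_neg (fun h : l = j => hj h.symm), zero_add, if_neg hj]
  ext i j
  rw [J_add_colSel_mul_apply, hAlj j, Matrix.one_apply]
  by_cases hi : i = l
  · rw [if_pos hi, hi, hX, zero_mul, add_zero]
    by_cases hj : j = l
    · rw [if_pos hj, if_pos hj.symm]; ring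
    · rw [if_neg hj, neg_zero, if_neg (fun h : l = j => hj h.symm)]
  · rw [if_neg hi, Matrix.add_apply, Jmat_apply, colSel_apply]
    by_cases hj : j = l
    · rw [hj, if_neg hi, if_pos rfl, if_pos rfl, mul_neg, mul_one]
      have : ¬(i = l) := hi
      rw [if_neg (show ¬(i = l) from hi)]
      ring
    · rw [if_neg hj, if_neg hj, mul_zero, add_zero, add_zero]
      by_cases hij : i = j
      · rw [if_pos hij, if_pos hij, if_neg (fun h : i = l => hi h)]
      · rw [if_neg hij, if_neg hij]

/-- `G_w^B (C_w^{-Bᵀ})ᵀ = 1` -/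
lemma D3 {B : Mat} (h : Adm B) :
    ∀ w : List (Fin n), Gmat B w * (Cmat (-Bᵀ) w)ᵀ = 1 := by
  intro w
  induction w using List.reverseRecOn with
  | nil => show (1 : Mat) * (1 : Mat)ᵀ = 1; rw [Matrix.transpose_one, one_mul]
  | append_singleton w l ih =>
    obtain ⟨σ, hσ, hσT⟩ := h.2 B (Or.inl ⟨[], rfl⟩) w l
    have hσpm := hσ.pm
    have hMT : Bmat (-Bᵀ) w = -(Bmat B w)ᵀ := by rw [Bmat_neg, Bmat_transpose]
    have hfac : (σ • Bmat (-Bᵀ) w)ᵀ = -(σ • Bmat B w) := by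
      rw [hMT, Matrix.transpose_smul, Matrix.transpose_neg, Matrix.transpose_transpose,
        smul_neg]
    rw [SR_G B w l σ hσ (GBC h w), SR_C (-Bᵀ) w l σ hσT, Matrix.transpose_mul,
      Matrix.transpose_add, Jmat_transpose, rowSel_transpose, matPos_transpose, hfac]
    have hll : matPos (-(σ • Bmat B w)) l l = 0 := by
      rw [matPos_apply, Matrix.neg_apply, smul_apply', (h.1 w).diag l, mul_zero, neg_zero]
      rfl
    rw [show Gmat B w * (Jmat n l + colSel (matPos (-(σ • Bmat B w))) l) *
          ((Jmat n l + colSel (matPos (-(σ • Bmat B w))) l) * (Cmat (-Bᵀ) w)ᵀ)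
        = Gmat B w * ((Jmat n l + colSel (matPos (-(σ • Bmat B w))) l) *
          (Jmat n l + colSel (matPos (-(σ • Bmat B w))) l)) * (Cmat (-Bᵀ) w)ᵀ by
        rw [mul_assoc, mul_assoc, mul_assoc],
      J_colSel_invol _ l hll, mul_one, ih]

end Core
section Main
variable {n : ℕ}
local notation "Mat" => Matrix (Fin n) (Fin n) ℤ

lemma rowSel_add (A B : Mat) (l : Fin n) :
    rowSel A l + rowSel B l = rowSel (A + B) l := by
  ext i j; by_cases h : i = l <;> simp [rowSel_apply, h]

lemma colSel_add (A B : Mat) (l : Fin n) :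
    colSel A l + colSel B l = colSel (A + B) l := by
  ext i j; by_cases h : j = l <;> simp [colSel_apply, h]

lemma sign_eq_of_common_entry_row {A : Mat} {i : Fin n} {ε : ℤ} {A' : Mat} {i' : Fin n}
    {ε' : ℤ} {j : Fin n}
    (h : RowHasSign A i ε) (h' : RowHasSign A' i' ε')
    (he : A i j = A' i' j) (hne : A i j ≠ 0) : ε = ε' := by
  rcases h.2 with ⟨h1, hs⟩ | ⟨h1, hs⟩ <;> rcases h'.2 with ⟨h1', hs'⟩ | ⟨h1', hs'⟩
  · rw [h1, h1']
  · exact absurd (le_antisymm (he ▸ hs' j) (hs j)) hne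
  · exact absurd (le_antisymm (hs j) (he ▸ hs' j)) hne
  · rw [h1, h1']

def DualStmt (B : Mat) (w : List (Fin n)) : Prop :=
  Gmat B w = (Cmat ((Bmat B w)ᵀ) w.reverse)ᵀ

def SixStmt (B : Mat) (k : Fin n) (w : List (Fin n)) : Prop :=
  ∃ ε : ℤ, RowHasSign (Gmat B w) k ε ∧
    Cmat (mutB B k) (k :: w) = (Jmat n k + rowSel (matPos (-(ε • B))) k) * Cmat B w ∧
    Gmat (mutB B k) (k :: w) = (Jmat n k + colSel (matPos (ε • B)) k) * Gmat B w

lemma dual_base (B : Mat) : DualStmt B ([] : List (Fin n)) := by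
  unfold DualStmt
  show (1 : Mat) = (1 : Mat)ᵀ
  rw [Matrix.transpose_one]

lemma six_base (B : Mat) (hBkk : ∀ k : Fin n, B k k = 0) (k : Fin n) :
    SixStmt B k ([] : List (Fin n)) := by
  refine ⟨1, ?_, ?_, ?_⟩
  · refine ⟨⟨k, ?_⟩, Or.inl ⟨rfl, fun j => ?_⟩⟩
    · show (1 : Mat) k k ≠ 0
      rw [Matrix.one_apply, if_pos rfl]; norm_num
    · show (0:ℤ) ≤ (1 : Mat) k j
      rw [Matrix.one_apply]; split <;> norm_num
  · have h0 : Cmat (mutB B k) [k] = 1 * (Jmat n k + rowSel (matPos (mutB B k)) k)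
        + colSel (matPos (-(1 : Mat))) k * (mutB B k) := Cmat_concat (mutB B k) [] k
    have hz : colSel (matPos (-(1 : Mat))) k = (0 : Mat) := by
      ext i j
      by_cases h : j = k
      · rw [colSel_apply, if_pos h, matPos_apply, Matrix.neg_apply, Matrix.one_apply]
        show max _ _ = (0 : Mat) i j
        split <;> simp
      · rw [colSel_apply, if_neg h]; rfl
    rw [h0, hz, Matrix.zero_mul, add_zero, one_mul]
    have : rowSel (matPos (mutB B k)) k = rowSel (matPos (-((1:ℤ) • B))) k := by
      ext i j
      by_cases h : i = k
      · rw [rowSel_apply, if_pos h, rowSel_apply, if_pos h, matPos_apply, matPos_apply,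
          Matrix.neg_apply, smul_apply', one_mul, h, mutB_apply, if_pos (Or.inl rfl)]
      · rw [rowSel_apply, if_neg h, rowSel_apply, if_neg h]
    rw [this, Cmat_nil, mul_one]
  · have h0 : Gmat (mutB B k) [k] = 1 * (Jmat n k + colSel (matPos (-(mutB B k))) k)
        - (mutB B k) * colSel (matPos (-(1 : Mat))) k := Gmat_concat (mutB B k) [] k
    have hz : colSel (matPos (-(1 : Mat))) k = (0 : Mat) := by
      ext i j
      by_cases h : j = k
      · rw [colSel_apply, if_pos h, matPos_apply, Matrix.neg_apply, Matrix.one_apply]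
        show max _ _ = (0 : Mat) i j
        split <;> simp
      · rw [colSel_apply, if_neg h]; rfl
    rw [h0, hz, Matrix.mul_zero, sub_zero, one_mul]
    have : colSel (matPos (-(mutB B k))) k = colSel (matPos ((1:ℤ) • B)) k := by
      ext i j
      by_cases h : j = k
      · rw [colSel_apply, if_pos h, colSel_apply, if_pos h, matPos_apply, matPos_apply,
          Matrix.neg_apply, smul_apply', one_mul, h, mutB_apply, if_pos (Or.inr rfl),
          neg_neg]
      · rw [colSel_apply, if_neg h, colSel_apply, if_neg h]
    rw [this, Gmat_nil, mul_one]

end Main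
section MainInd
variable {n : ℕ}
local notation "Mat" => Matrix (Fin n) (Fin n) ℤ

theorem mainInd : ∀ (N : ℕ) (B : Mat), Adm B →
    (∀ w : List (Fin n), w.length = N → DualStmt B w) ∧
    (∀ (k : Fin n) (w : List (Fin n)), w.length = N → SixStmt B k w) := by
  intro N
  induction N with
  | zero =>
    intro B hAdm
    constructor
    · intro w hw
      rw [List.length_eq_zero_iff] at hw; subst hw
      exact dual_base B
    · intro k w hw
      rw [List.length_eq_zero_iff] at hw; subst hw
      exact six_base B (fun k' => (hAdm.1 []).diag k') k
  | succ N ih =>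
    -- Dual at level N+1
    have hdual : ∀ B : Mat, Adm B → ∀ w : List (Fin n), w.length = N + 1 → DualStmt B w := by
      intro B hAdm w hw
      obtain ⟨v, l, rfl⟩ : ∃ v l, w = v ++ [l] := by
        rcases List.eq_nil_or_concat w with h | ⟨v, l, h⟩
        · subst h; simp at hw
        · exact ⟨v, l, by rw [h, List.concat_eq_append]⟩
      have hv : v.length = N := by
        have := hw; rw [List.length_append, List.length_singleton] at this; omega
      have hAdmT : Adm ((Bmat B v)ᵀ) := Adm_transpose (Adm_Bmat hAdm v)
      obtain ⟨et, hrow, hCf, -⟩ :=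
        (ih ((Bmat B v)ᵀ) hAdmT).2 l v.reverse (by simp [hv])
      have hGrev : Gmat ((Bmat B v)ᵀ) v.reverse = (Cmat B v)ᵀ := by
        have hD := (ih ((Bmat B v)ᵀ) hAdmT).1 v.reverse (by simp [hv])
        unfold DualStmt at hD
        have h1 : Bmat ((Bmat B v)ᵀ) v.reverse = Bᵀ := by
          rw [Bmat_transpose, Bmat_reverse]
        rw [h1, Matrix.transpose_transpose, List.reverse_reverse] at hD
        exact hD
      have hcol : ColHasSign (Cmat B v) l et := by
        rw [hGrev] at hrow; exact rowHasSign_transpose.mp hrow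
      unfold DualStmt
      have e1 : (Bmat B (v ++ [l]))ᵀ = mutB ((Bmat B v)ᵀ) l := by
        rw [Bmat_concat, ← mutB_transpose]
      have e2 : (v ++ [l]).reverse = l :: v.reverse := by simp
      rw [e1, e2, hCf, Matrix.transpose_mul, Matrix.transpose_add, Jmat_transpose,
        rowSel_transpose, matPos_transpose]
      have e3 : (-(et • (Bmat B v)ᵀ))ᵀ = -(et • Bmat B v) := by
        rw [Matrix.transpose_neg, Matrix.transpose_smul, Matrix.transpose_transpose]
      rw [e3]
      have hDv := (ih B hAdm).1 v hv
      unfold DualStmt at hDv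
      rw [← hDv]
      exact SR_G B v l et hcol (GBC hAdm v)
    -- dual at both levels
    have dual_any : ∀ X : Mat, Adm X → ∀ u : List (Fin n),
        (u.length = N ∨ u.length = N + 1) → DualStmt X u := by
      intro X hX u hu
      rcases hu with h | h
      · exact (ih X hX).1 u h
      · exact hdual X hX u h
    -- sign pairing between G_u^X and G_u^{-Xᵀ}
    have signpair : ∀ X : Mat, Adm X → ∀ u : List (Fin n),
        (u.length = N ∨ u.length = N + 1) → ∀ k : Fin n,
        ∃ e : ℤ, RowHasSign (Gmat X u) k e ∧ RowHasSign (Gmat (-Xᵀ) u) k e := by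
      intro X hX u hu k
      obtain ⟨e, h1, h2⟩ := hX.2 (Bmat (-X) u) (Or.inr ⟨u, rfl⟩) u.reverse k
      rw [Bmat_neg] at h1 h2
      have h2' : ColHasSign (Cmat ((Bmat X u)ᵀ) u.reverse) k e := by
        rwa [Matrix.transpose_neg, neg_neg] at h2
      refine ⟨e, ?_, ?_⟩
      · have hD := dual_any X hX u hu
        unfold DualStmt at hD
        rw [hD]
        exact rowHasSign_transpose.mpr h2'
      · have hD := dual_any (-Xᵀ) (Adm_negT hX) u hu
        unfold DualStmt at hD
        have e1 : (Bmat (-Xᵀ) u)ᵀ = -(Bmat X u) := by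
          rw [Bmat_neg, Bmat_transpose, Matrix.transpose_neg, Matrix.transpose_transpose]
        rw [e1] at hD
        rw [hD]
        exact rowHasSign_transpose.mpr h1
    -- concentration transfer
    have transfer : ∀ X : Mat, Adm X → ∀ u : List (Fin n), u.length = N →
        ∀ (k l : Fin n), (∀ j, j ≠ l → Gmat X u k j = 0) →
        ∀ j, j ≠ l → Gmat (-Xᵀ) u k j = 0 := by
      intro X hX u hu k l hconc
      obtain ⟨e, hgx, hgt⟩ := signpair X hX u (Or.inl hu) k
      obtain ⟨j0, hj0⟩ := hgx.1
      have hgl : Gmat X u k l ≠ 0 := by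
        by_cases h : j0 = l
        · rwa [h] at hj0
        · exact absurd (hconc j0 h) hj0
      obtain ⟨σ, hσx, hσt⟩ := hX.2 X (Or.inl ⟨[], rfl⟩) u l
      have hSR := SR_G X u l σ hσx (GBC hX u)
      have hrow' : ∀ j, Gmat X (u ++ [l]) k j
          = if j = l then -(Gmat X u k l) else 0 := by
        intro j
        rw [hSR, mul_J_add_colSel_apply]
        by_cases hj : j = l
        · rw [if_pos hj, if_pos hj]
          have hz : (Gmat X u * matPos (-(σ • Bmat X u))) k l = 0 := by
            rw [Matrix.mul_apply]
            apply Finset.sum_eq_zero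
            intro s _
            by_cases hs : s = l
            · rw [hs, matPos_apply, Matrix.neg_apply, smul_apply', (hX.1 u).diag l,
                mul_zero, neg_zero, max_self, mul_zero]
            · rw [hconc s hs, zero_mul]
          rw [hz, add_zero]
        · rw [if_neg hj, if_neg hj]
          exact hconc j hj
      have hrs' : RowHasSign (Gmat X (u ++ [l])) k (-e) := by
        refine ⟨⟨l, by rw [hrow' l, if_pos rfl]; exact neg_ne_zero.mpr hgl⟩, ?_⟩
        rcases hgx.2 with ⟨he, hp⟩ | ⟨he, hp⟩
        · right
          refine ⟨by rw [he], fun j => ?_⟩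
          rw [hrow' j]
          split
          · exact neg_nonpos.mpr (hp l)
          · exact le_rfl
        · left
          refine ⟨by rw [he]; norm_num, fun j => ?_⟩
          rw [hrow' j]
          split
          · exact neg_nonneg.mpr (hp l)
          · exact le_rfl
      obtain ⟨e2, hg2x, hg2t⟩ := signpair X hX (u ++ [l])
        (Or.inr (by rw [List.length_append, List.length_singleton, hu])) k
      have he2 : e2 = -e := hg2x.unique hrs'
      have hAdmT : Adm (-Xᵀ) := Adm_negT hX
      have hSRT := SR_G (-Xᵀ) u l σ hσt (GBC hAdmT u)
      have hsame : ∀ j, j ≠ l → Gmat (-Xᵀ) (u ++ [l]) k j = Gmat (-Xᵀ) u k j := by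
        intro j hj
        rw [hSRT, mul_J_add_colSel_apply, if_neg hj]
      intro j hjl
      rw [he2] at hg2t
      rcases hgt.2 with ⟨he, hp⟩ | ⟨he, hp⟩ <;> rcases hg2t.2 with ⟨he', hp'⟩ | ⟨he', hp'⟩
      · exfalso; rw [he] at he'; omega
      · refine le_antisymm ?_ (hp j)
        have := hp' j
        rwa [hsame j hjl] at this
      · refine le_antisymm (hp j) ?_
        have := hp' j
        rwa [hsame j hjl] at this
      · exfalso; rw [he] at he'; omega
    have hsix : ∀ B : Mat, Adm B → ∀ (k : Fin n) (w : List (Fin n)), w.length = N + 1 →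
        SixStmt B k w := by
      intro B hAdm k w hw
      obtain ⟨v, l, rfl⟩ : ∃ v l, w = v ++ [l] := by
        rcases List.eq_nil_or_concat w with h | ⟨v, l, h⟩
        · subst h; simp at hw
        · exact ⟨v, l, by rw [h, List.concat_eq_append]⟩
      have hv : v.length = N := by
        have := hw; rw [List.length_append, List.length_singleton] at this; omega
      obtain ⟨ε, hrowG, hCst, hGst⟩ := (ih B hAdm).2 k v hv
      have hεpm := hrowG.pm
      have hAdm' : Adm (mutB B k) := Adm_mut hAdm k
      obtain ⟨σ, hσC, hσCt⟩ := hAdm.2 B (Or.inl ⟨[], rfl⟩) v l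
      have hσpm := hσC.pm
      have hss : SignSkew (Bmat B v) := hAdm.1 v
      have hBkk : B k k = 0 := (hAdm.1 []).diag k
      have hM' : Bmat (mutB B k) (k :: v) = Bmat B v := Bmat_mut_cons B k v
      have hGBCv := GBC hAdm v
      have hGBC' := GBC hAdm' (k :: v)
      have hAdmT : Adm (-Bᵀ) := Adm_negT hAdm
      have hD3B := D3 hAdm v
      have hD3T : Gmat (-Bᵀ) v * (Cmat B v)ᵀ = 1 := by
        have h0 := D3 hAdmT v
        rwa [Matrix.transpose_neg, Matrix.transpose_transpose, neg_neg] at h0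
      have hlist : k :: (v ++ [l]) = (k :: v) ++ [l] := rfl
      have hSRCB := SR_C B v l σ hσC
      have hSRGB := SR_G B v l σ hσC hGBCv
      by_cases hcc : ∀ i, i ≠ k → Cmat B v i l = 0
      · -- CASE 2 : column l of C concentrated at k
        have hCkl : Cmat B v k l ≠ 0 := by
          obtain ⟨i1, hi1⟩ := hσC.1
          by_cases h : i1 = k
          · rwa [h] at hi1
          · exact absurd (hcc i1 h) hi1
        have hinv : (Cmat B v)ᵀ * Gmat (-Bᵀ) v = 1 := mul_eq_one_comm.mp hD3T
        have hentry : ∀ j, Cmat B v k l * Gmat (-Bᵀ) v k j = (1 : Mat) l j := by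
          intro j
          have h0 : ((Cmat B v)ᵀ * Gmat (-Bᵀ) v) l j
              = Cmat B v k l * Gmat (-Bᵀ) v k j := by
            rw [Matrix.mul_apply, Finset.sum_eq_single k]
            · rfl
            · intro s _ hs
              rw [show (Cmat B v)ᵀ l s = Cmat B v s l from rfl, hcc s hs, zero_mul]
            · intro h; exact absurd (Finset.mem_univ k) h
          rw [← h0, hinv]
        have hconcGt : ∀ j, j ≠ l → Gmat (-Bᵀ) v k j = 0 := by
          intro j hj
          have h1 := hentry j
          rw [Matrix.one_apply, if_neg (fun h : l = j => hj h.symm)] at h1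
          exact (mul_eq_zero.mp h1).resolve_left hCkl
        have hunit : Cmat B v k l * Gmat (-Bᵀ) v k l = 1 := by
          have h1 := hentry l
          rwa [Matrix.one_apply, if_pos rfl] at h1
        have hconcG : ∀ j, j ≠ l → Gmat B v k j = 0 := by
          have ht := transfer (-Bᵀ) hAdmT v hv k l hconcGt
          intro j hj
          have h1 := ht j hj
          rwa [Matrix.transpose_neg, Matrix.transpose_transpose, neg_neg] at h1
        have hGkl : Gmat B v k l = ε := by
          have h0 : (Gmat B v * (Cmat (-Bᵀ) v)ᵀ) k k
              = Gmat B v k l * Cmat (-Bᵀ) v k l := by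
            rw [Matrix.mul_apply, Finset.sum_eq_single l]
            · rfl
            · intro s _ hs; rw [hconcG s hs, zero_mul]
            · intro h; exact absurd (Finset.mem_univ l) h
          rw [hD3B, Matrix.one_apply, if_pos rfl] at h0
          rcases Int.mul_eq_one_iff_eq_one_or_neg_one.mp h0.symm with ⟨h1, -⟩ | ⟨h1, -⟩
          · rcases hrowG.2 with ⟨he, -⟩ | ⟨-, hp⟩
            · rw [h1, he]
            · exfalso; have := hp l; omega
          · rcases hrowG.2 with ⟨-, hp⟩ | ⟨he, -⟩
            · exfalso; have := hp l; omega
            · rw [h1, he]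
        have hCkl_val : Cmat B v k l = σ := by
          rcases Int.mul_eq_one_iff_eq_one_or_neg_one.mp hunit with ⟨h1, -⟩ | ⟨h1, -⟩
          · rcases hσC.2 with ⟨he, -⟩ | ⟨-, hp⟩
            · rw [h1, he]
            · exfalso; have := hp k; omega
          · rcases hσC.2 with ⟨-, hp⟩ | ⟨he, -⟩
            · exfalso; have := hp k; omega
            · rw [h1, he]
        have hmz : (matPos (-(ε • B)) * Cmat B v) k l = 0 := by
          rw [Matrix.mul_apply]
          apply Finset.sum_eq_zero
          intro s _
          by_cases hs : s = k
          · rw [hs, matPos_apply, Matrix.neg_apply, smul_apply', hBkk, mul_zero, neg_zero,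
              max_self, zero_mul]
          · rw [hcc s hs, mul_zero]
        have hCstar_col : ∀ i, Cmat (mutB B k) (k :: v) i l
            = if i = k then -σ else 0 := by
          intro i
          rw [hCst, J_add_rowSel_mul_apply]
          by_cases hi : i = k
          · rw [if_pos hi, if_pos hi, hmz, add_zero, hCkl_val]
          · rw [if_neg hi, if_neg hi]; exact hcc i hi
        have hkne : Cmat (mutB B k) (k :: v) k l ≠ 0 := by
          rw [hCstar_col k, if_pos rfl]
          rcases hσpm with h | h <;> rw [h] <;> norm_num
        have hσstar : ColHasSign (Cmat (mutB B k) (k :: v)) l (-σ) := by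
          refine ⟨⟨k, hkne⟩, ?_⟩
          rcases hσpm with h | h
          · right
            refine ⟨by rw [h], fun i => ?_⟩
            rw [hCstar_col i]; split
            · rw [h]; norm_num
            · exact le_rfl
          · left
            refine ⟨by rw [h]; norm_num, fun i => ?_⟩
            rw [hCstar_col i]; split
            · rw [h]; norm_num
            · exact le_rfl
        have hrow' : ∀ j, Gmat B (v ++ [l]) k j = if j = l then -ε else 0 := by
          intro j
          rw [hSRGB, mul_J_add_colSel_apply]
          by_cases hj : j = l
          · rw [if_pos hj, if_pos hj]
            have hz : (Gmat B v * matPos (-(σ • Bmat B v))) k l = 0 := by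
              rw [Matrix.mul_apply]
              apply Finset.sum_eq_zero
              intro s _
              by_cases hs : s = l
              · rw [hs, matPos_apply, Matrix.neg_apply, smul_apply', hss.diag l, mul_zero,
                  neg_zero, max_self, mul_zero]
              · rw [hconcG s hs, zero_mul]
            rw [hz, add_zero, hGkl]
          · rw [if_neg hj, if_neg hj]; exact hconcG j hj
        have hlne : Gmat B (v ++ [l]) k l ≠ 0 := by
          rw [hrow' l, if_pos rfl]
          rcases hεpm with h | h <;> rw [h] <;> norm_num
        have hrowsign' : RowHasSign (Gmat B (v ++ [l])) k (-ε) := by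
          refine ⟨⟨l, hlne⟩, ?_⟩
          rcases hεpm with h | h
          · right
            refine ⟨by rw [h], fun j => ?_⟩
            rw [hrow' j]; split
            · rw [h]; norm_num
            · exact le_rfl
          · left
            refine ⟨by rw [h]; norm_num, fun j => ?_⟩
            rw [hrow' j]; split
            · rw [h]; norm_num
            · exact le_rfl
        have hSRC' := SR_C (mutB B k) (k :: v) l (-σ) hσstar
        rw [hM'] at hSRC'
        have hSRG' := SR_G (mutB B k) (k :: v) l (-σ) hσstar hGBC'
        rw [hM'] at hSRG'
        set R : Mat := Matrix.of (fun i j => if i = k then Bmat B v l j else 0) with hRdef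
        have hRa : ∀ i j, R i j = if i = k then Bmat B v l j else 0 := fun i j => rfl
        set S : Mat := Matrix.of (fun i j => if j = l then B i k else 0) with hSdef
        have hSa : ∀ i j, S i j = if j = l then B i k else 0 := fun i j => rfl
        have hCR : Cmat B v * rowSel (σ • Bmat B v) l = R := by
          ext i j
          rw [mul_rowSel_apply, hRa]
          by_cases hi : i = k
          · rw [if_pos hi, hi, hCkl_val, smul_apply']
            rcases hσpm with h | h <;> rw [h] <;> ring
          · rw [if_neg hi, hcc i hi, zero_mul]
        have hF'F : Jmat n l + rowSel (matPos ((-σ) • Bmat B v)) l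
            = (Jmat n l + rowSel (matPos (σ • Bmat B v)) l) - rowSel (σ • Bmat B v) l := by
          rw [neg_smul]
          rw [matPos_neg_eq_sub (σ • Bmat B v), ← rowSel_sub]; abel
        have hCF' : Cmat B v * (Jmat n l + rowSel (matPos ((-σ) • Bmat B v)) l)
            = Cmat B (v ++ [l]) - R := by
          rw [hF'F, mul_sub, hCR, ← hSRCB]
        have hPR : (Jmat n k + rowSel (matPos (-(ε • B))) k) * R = -R := by
          ext i j
          rw [J_add_rowSel_mul_apply]
          by_cases hi : i = k
          · rw [if_pos hi]
            have hz : (matPos (-(ε • B)) * R) k j = 0 := by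
              rw [Matrix.mul_apply]
              apply Finset.sum_eq_zero
              intro s _
              by_cases hs : s = k
              · rw [hs, matPos_apply, Matrix.neg_apply, smul_apply', hBkk, mul_zero,
                  neg_zero, max_self, zero_mul]
              · rw [show R s j = 0 from by rw [hRa, if_neg hs], mul_zero]
            rw [hz, add_zero, hi]
            rfl
          · rw [if_neg hi]
            rw [show R i j = 0 from by rw [hRa, if_neg hi]]
            show (0 : ℤ) = (-R) i j
            rw [show (-R) i j = -(R i j) from rfl, show R i j = 0 from by rw [hRa, if_neg hi]]
            norm_num
        have hPfac : Jmat n k + rowSel (matPos (ε • B)) k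
            = (Jmat n k + rowSel (matPos (-(ε • B))) k) + rowSel (ε • B) k := by
          rw [matPos_eq_negadd (ε • B), ← rowSel_add]; abel
        have hRG : rowSel (ε • B) k * Cmat B (v ++ [l]) = R := by
          ext i j
          rw [rowSel_mul_apply, hRa]
          by_cases hi : i = k
          · rw [if_pos hi, if_pos hi, Matrix.smul_mul, smul_apply', ← GBC hAdm (v ++ [l])]
            have h2 : (Gmat B (v ++ [l]) * Bmat B (v ++ [l])) k j
                = -ε * Bmat B (v ++ [l]) l j := by
              rw [Matrix.mul_apply, Finset.sum_eq_single l]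
              · rw [hrow' l, if_pos rfl]
              · intro s _ hs; rw [hrow' s, if_neg hs, zero_mul]
              · intro h; exact absurd (Finset.mem_univ l) h
            rw [h2, Bmat_concat]
            rw [show mutB (Bmat B v) l l j = -(Bmat B v l j) from by
              rw [mutB_apply, if_pos (Or.inl rfl)]]
            rcases hεpm with h | h <;> rw [h] <;> ring
          · rw [if_neg hi, if_neg hi]
        have hGS : Gmat B v * colSel (σ • Bmat B v) l = S := by
          ext i j
          rw [mul_colSel_apply, hSa]
          by_cases hj : j = l
          · rw [if_pos hj, if_pos hj, Matrix.mul_smul, smul_apply', hGBCv]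
            have h2 : (B * Cmat B v) i l = B i k * σ := by
              rw [Matrix.mul_apply, Finset.sum_eq_single k]
              · rw [hCkl_val]
              · intro s _ hs; rw [hcc s hs, mul_zero]
              · intro h; exact absurd (Finset.mem_univ k) h
            rw [h2]
            rcases hσpm with h | h <;> rw [h] <;> ring
          · rw [if_neg hj, if_neg hj]
        have hFtF : Jmat n l + colSel (matPos (-((-σ) • Bmat B v))) l
            = (Jmat n l + colSel (matPos (-(σ • Bmat B v))) l) + colSel (σ • Bmat B v) l := by
          rw [neg_smul, neg_neg]
          conv_lhs => rw [matPos_eq_negadd (σ • Bmat B v)]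
          rw [← colSel_add]; abel
        have hGF' : Gmat B v * (Jmat n l + colSel (matPos (-((-σ) • Bmat B v))) l)
            = Gmat B (v ++ [l]) + S := by
          rw [hFtF, mul_add, hGS, ← hSRGB]
        have hQS : (Jmat n k + colSel (matPos (ε • B)) k) * S = S := by
          ext i j
          rw [J_add_colSel_mul_apply]
          have hSk : S k j = 0 := by
            rw [hSa]; split
            · exact hBkk
            · rfl
          by_cases hi : i = k
          · rw [if_pos hi, hSk, neg_zero, mul_zero, add_zero, hi, hSk]
          · rw [if_neg hi, hSk, mul_zero, add_zero]
        have hQfac : Jmat n k + colSel (matPos (-(ε • B))) k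
            = (Jmat n k + colSel (matPos (ε • B)) k) - colSel (ε • B) k := by
          rw [matPos_neg_eq_sub (ε • B), ← colSel_sub]; abel
        have hCGf : colSel (ε • B) k * Gmat B (v ++ [l]) = -S := by
          ext i j
          rw [colSel_mul_apply, hrow' j]
          rw [show (-S) i j = -(S i j) from rfl, hSa]
          by_cases hj : j = l
          · rw [if_pos hj, if_pos hj, smul_apply']
            rcases hεpm with h | h <;> rw [h] <;> ring
          · rw [if_neg hj, if_neg hj, mul_zero, neg_zero]
        refine ⟨-ε, hrowsign', ?_, ?_⟩
        · rw [hlist, hSRC', hCst, mul_assoc, hCF', mul_sub, hPR, sub_neg_eq_add,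
            show -((-ε : ℤ) • B) = ε • B from by rw [neg_smul, neg_neg], hPfac]
          simp only [Matrix.add_mul]
          rw [hRG]
        · rw [hlist, hSRG', hGst, mul_assoc, hGF', mul_add, hQS,
            show ((-ε : ℤ) • B) = -(ε • B) from neg_smul ε B, hQfac]
          simp only [Matrix.sub_mul, Matrix.add_mul]
          rw [hCGf]
          abel
      · -- CASE 1 : column l of C not concentrated at k
        push_neg at hcc
        obtain ⟨i0, hi0k, hi0⟩ := hcc
        have hnotconcG : ¬(∀ j, j ≠ l → Gmat B v k j = 0) := by
          intro hconcG
          have hconcGt := transfer B hAdm v hv k l hconcG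
          obtain ⟨e, -, hgt⟩ := signpair B hAdm v (Or.inl hv) k
          obtain ⟨j1, hj1⟩ := hgt.1
          have hj1l : Gmat (-Bᵀ) v k l ≠ 0 := by
            by_cases h : j1 = l
            · rwa [h] at hj1
            · exact absurd (hconcGt j1 h) hj1
          have h0 : (Gmat (-Bᵀ) v * (Cmat B v)ᵀ) k i0
              = Gmat (-Bᵀ) v k l * Cmat B v i0 l := by
            rw [Matrix.mul_apply, Finset.sum_eq_single l]
            · rfl
            · intro s _ hs; rw [hconcGt s hs, zero_mul]
            · intro h; exact absurd (Finset.mem_univ l) h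
          rw [hD3T, Matrix.one_apply, if_neg (fun h : k = i0 => hi0k h.symm)] at h0
          exact hi0 ((mul_eq_zero.mp h0.symm).resolve_left hj1l)
        push_neg at hnotconcG
        obtain ⟨j0, hj0l, hj0⟩ := hnotconcG
        obtain ⟨σ', hσ'C, -⟩ := hAdm.2 (mutB B k) (Or.inl ⟨[k], rfl⟩) (k :: v) l
        have he0 : Cmat (mutB B k) (k :: v) i0 l = Cmat B v i0 l := by
          rw [hCst, J_add_rowSel_mul_apply, if_neg hi0k]
        have hσ'σ : σ' = σ :=
          sign_eq_of_common_entry hσ'C hσC he0 (by rw [he0]; exact hi0)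
        rw [hσ'σ] at hσ'C
        have hSRC' := SR_C (mutB B k) (k :: v) l σ hσ'C
        rw [hM'] at hSRC'
        have hSRG' := SR_G (mutB B k) (k :: v) l σ hσ'C hGBC'
        rw [hM'] at hSRG'
        obtain ⟨e2, hg2, -⟩ := signpair B hAdm (v ++ [l])
          (Or.inr (by rw [List.length_append, List.length_singleton, hv])) k
        have hentry : Gmat B (v ++ [l]) k j0 = Gmat B v k j0 := by
          rw [hSRGB, mul_J_add_colSel_apply, if_neg hj0l]
        have he2ε : e2 = ε :=
          sign_eq_of_common_entry_row hg2 hrowG hentry (by rw [hentry]; exact hj0)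
        rw [he2ε] at hg2
        refine ⟨ε, hg2, ?_, ?_⟩
        · rw [hlist, hSRC', hCst, mul_assoc, ← hSRCB]
        · rw [hlist, hSRG', hGst, mul_assoc, ← hSRGB]
    intro B hAdm
    exact ⟨hdual B hAdm, hsix B hAdm⟩

end MainInd

/-- dual mutation rule: under the Assumption, if `ε` is the sign of the
`k`-th row of `G_w^B`, then `C_{k·w}^{μ_k(B)} = (J_k + [-ε B]₊^{k·}) C_w^B` and
`G_{k·w}^{μ_k(B)} = (J_k + [ε B]₊^{·k}) G_w^B`. -/
theorem dual_mutation {n : ℕ} (B : Matrix (Fin n) (Fin n) ℤ) (hB : TotSSS B)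
    (hA : TheAssumption B) (w : List (Fin n)) (k : Fin n) (ε : ℤ)
    (hε : RowHasSign (Gmat B w) k ε) :
    Cmat (mutB B k) (k :: w) = (Jmat n k + rowSel (matPos (-(ε • B))) k) * Cmat B w ∧
    Gmat (mutB B k) (k :: w) = (Jmat n k + colSel (matPos (ε • B)) k) * Gmat B w := by
  obtain ⟨ε0, hr, hC, hG⟩ := (mainInd w.length B ⟨hB, hA⟩).2 k w rfl
  have hεε0 : ε = ε0 := hε.unique hr
  rw [hεε0]
  exact ⟨hC, hG⟩
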